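/- arXiv:2409.04287 — 2 statements merged into one kernel-verified Lean document; each statement's English description precedes it below -/
import Mathlib

section
/- Let K̂₁¹(t,r,a,b) := G(r,a,b)^{-1} e^{λ₁⁰(r,a,b)t}. Then for all j, m ∈ ℕ, |∂^{j+m}/(∂aʲ ∂bᵐ) K̂₁¹(t,r,a,b)| ≤ C e^{-c r^{2(σ-σ₁)}t} r^{-2σ₁+2j(σ₂-σ₁)+2m(σ-2σ₁)} for all (r,a,b) ∈ (0,ε*] × [0,1]² and t > 0. Moreover, at (a,b)=(0,0), the derivative equals e^{-r^{2(σ-σ₁)}t} r^{-2σ₁+2j(σ₂-σ₁)+2m(σ-2σ₁)} · Σ_{h=0}^{j+m} C*_{h,j,m} (r^{2(σ-σ₁)}t)^h for constants C*_{h,j,m}. -/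
open Real Set

noncomputable def Gamma1 (σ₁ σ₂ r a : ℝ) : ℝ := (1 + a * r ^ (2*(σ₂-σ₁)))⁻¹

noncomputable def Gamma2 (σ σ₁ σ₂ r a b : ℝ) : ℝ :=
  Real.sqrt (1 - 4*b*r ^ (2*(σ-2*σ₁)) * (Gamma1 σ₁ σ₂ r a)^2)

/-- Mixed partial derivative `∂^{j+m}/(∂aʲ ∂bᵐ)`. -/
noncomputable def pderiv2 (j m : ℕ) (f : ℝ → ℝ → ℝ) (a b : ℝ) : ℝ :=
  iteratedDeriv m (fun b' => iteratedDeriv j (fun a' => f a' b') a) b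

noncomputable def lam1 (σ σ₁ σ₂ r a b : ℝ) : ℝ :=
  -2 * r ^ (2*(σ-σ₁)) * Gamma1 σ₁ σ₂ r a * (1 + Gamma2 σ σ₁ σ₂ r a b)⁻¹

noncomputable def lam2 (σ σ₁ σ₂ r a b : ℝ) : ℝ :=
  -(r ^ (2*σ₁) / 2) * (1 + a * r ^ (2*(σ₂-σ₁))) * (1 + Gamma2 σ σ₁ σ₂ r a b)

noncomputable def Gfun (σ σ₁ σ₂ r a b : ℝ) : ℝ :=
  r ^ (2*σ₁) * (1 + a * r ^ (2*(σ₂-σ₁))) * Gamma2 σ σ₁ σ₂ r a b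

noncomputable def K11 (σ σ₁ σ₂ t r a b : ℝ) : ℝ :=
  (Gfun σ σ₁ σ₂ r a b)⁻¹ * Real.exp (lam1 σ σ₁ σ₂ r a b * t)


open Real Set

namespace Stmt8Aux

/-- `g(u,v) = 1 - 4v/(1+u)²`. -/
noncomputable def gg (u v : ℝ) : ℝ := 1 - 4 * v * ((1+u)⁻¹)^2

structure Mono where
  c : ℝ
  p : ℕ
  q : ℕ
  s : ℕ
  e : ℕ
  hh : ℕ

noncomputable def Mono.ev (M : Mono) (T u v : ℝ) : ℝ :=
  M.c * v ^ M.p * ((1+u)⁻¹) ^ M.q * ((Real.sqrt (gg u v))⁻¹) ^ M.s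
    * ((1 + Real.sqrt (gg u v))⁻¹) ^ M.e * T ^ M.hh
    * Real.exp (-(2*T) * (1+u)⁻¹ * (1 + Real.sqrt (gg u v))⁻¹)

def Du (M : Mono) : List Mono :=
  [⟨M.c * (-(M.q:ℝ)), M.p, M.q+1, M.s, M.e, M.hh⟩,
   ⟨M.c * (-(4*(M.s:ℝ))), M.p+1, M.q+3, M.s+2, M.e, M.hh⟩,
   ⟨M.c * (-(4*(M.e:ℝ))), M.p+1, M.q+3, M.s+1, M.e+1, M.hh⟩,
   ⟨M.c * 2, M.p, M.q+2, M.s, M.e+1, M.hh+1⟩,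
   ⟨M.c * 8, M.p+1, M.q+4, M.s+1, M.e+2, M.hh+1⟩]

def Dv (M : Mono) : List Mono :=
  [⟨M.c * (M.p:ℝ), M.p-1, M.q, M.s, M.e, M.hh⟩,
   ⟨M.c * (2*(M.s:ℝ)), M.p, M.q+2, M.s+2, M.e, M.hh⟩,
   ⟨M.c * (2*(M.e:ℝ)), M.p, M.q+2, M.s+1, M.e+1, M.hh⟩,
   ⟨M.c * (-4), M.p, M.q+3, M.s+1, M.e+2, M.hh+1⟩]

noncomputable def evL (L : List Mono) (T u v : ℝ) : ℝ := (L.map (Mono.ev · T u v)).sum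

def DuL (L : List Mono) : List Mono := L.flatMap Du
def DvL (L : List Mono) : List Mono := L.flatMap Dv

lemma evL_cons (M : Mono) (L : List Mono) (T u v : ℝ) :
    evL (M :: L) T u v = M.ev T u v + evL L T u v := by simp [evL]

lemma evL_append (L₁ L₂ : List Mono) (T u v : ℝ) :
    evL (L₁ ++ L₂) T u v = evL L₁ T u v + evL L₂ T u v := by simp [evL]

/- helpers to kill `n - 1` exponents -/
lemma pow_pred_helper (n : ℕ) (x y c : ℝ) :
    (n:ℝ) * x ^ (n-1) * (c * (x * y)) = (n:ℝ) * c * x ^ n * y := by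
  cases n with
  | zero => simp
  | succ k => push_cast; rw [pow_succ]; ring

end Stmt8Aux

namespace Stmt8Aux

lemma mul_pred (n : ℕ) (x y : ℝ) : (n:ℝ) * x^(n-1) * (y * x) = (n:ℝ) * (y * x^n) := by
  cases n with
  | zero => simp
  | succ k => push_cast; rw [pow_succ]; ring

lemma hasDerivAt_ev_u (M : Mono) (T v u : ℝ) (hu : 0 < 1 + u) (hg : 0 < gg u v) :
    HasDerivAt (fun u' => M.ev T u' v) (evL (Du M) T u v) u := by
  have hune : (1+u) ≠ 0 := ne_of_gt hu
  have hgne : gg u v ≠ 0 := ne_of_gt hg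
  have hW0 : 0 < Real.sqrt (gg u v) := Real.sqrt_pos.mpr hg
  have hWne : Real.sqrt (gg u v) ≠ 0 := ne_of_gt hW0
  have h1Wne : (1 + Real.sqrt (gg u v)) ≠ 0 := by positivity
  have hX : HasDerivAt (fun u' => (1+u')⁻¹) (-(1+u)⁻¹ * (1+u)⁻¹) u := by
    have h := ((hasDerivAt_id u).const_add 1).inv hune
    simp only [id_eq] at h
    refine h.congr_deriv ?_
    rw [div_eq_mul_inv, pow_two, mul_inv]; ring
  have hg' : HasDerivAt (fun u' => gg u' v)
      (8*v*((1+u)⁻¹*(1+u)⁻¹*(1+u)⁻¹)) u := by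
    have h := ((hX.pow 2).const_mul (4*v)).const_sub 1
    refine h.congr_deriv ?_
    norm_num; ring
  have hW : HasDerivAt (fun u' => Real.sqrt (gg u' v))
      (4*v*((1+u)⁻¹*(1+u)⁻¹*(1+u)⁻¹)*(Real.sqrt (gg u v))⁻¹) u := by
    have h := hg'.sqrt hgne
    refine h.congr_deriv ?_
    rw [div_eq_mul_inv, mul_inv]; ring
  have hWi : HasDerivAt (fun u' => (Real.sqrt (gg u' v))⁻¹)
      (-(4*v*((1+u)⁻¹*(1+u)⁻¹*(1+u)⁻¹))*((Real.sqrt (gg u v))⁻¹*(Real.sqrt (gg u v))⁻¹)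
        * (Real.sqrt (gg u v))⁻¹) u := by
    have h := hW.inv hWne
    refine h.congr_deriv ?_
    rw [div_eq_mul_inv, pow_two, mul_inv]; ring
  have hB : HasDerivAt (fun u' => (1 + Real.sqrt (gg u' v))⁻¹)
      (-(4*v*((1+u)⁻¹*(1+u)⁻¹*(1+u)⁻¹)*(Real.sqrt (gg u v))⁻¹)*(1+Real.sqrt (gg u v))⁻¹
        * (1+Real.sqrt (gg u v))⁻¹) u := by
    have h := (hW.const_add 1).inv h1Wne
    refine h.congr_deriv ?_
    rw [div_eq_mul_inv, pow_two, mul_inv]; ring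
  have hE := ((hX.const_mul (-(2*T))).mul hB).exp
  have h1 := (hX.pow M.q).const_mul (M.c * v ^ M.p)
  have h2 := h1.mul (hWi.pow M.s)
  have h3 := h2.mul (hB.pow M.e)
  have h4 := h3.mul_const (T ^ M.hh)
  have h5 := h4.mul hE
  refine h5.congr_deriv ?_
  simp only [evL, Du, List.map_cons, List.map_nil, List.sum_cons, List.sum_nil, Mono.ev,
    Pi.mul_apply, Pi.pow_apply]
  rw [mul_pred, mul_pred, mul_pred]
  ring

end Stmt8Aux

namespace Stmt8Aux

lemma hasDerivAt_ev_v (M : Mono) (T u : ℝ) (v : ℝ) (hu : 0 < 1 + u) (hg : 0 < gg u v) :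
    HasDerivAt (fun v' => M.ev T u v') (evL (Dv M) T u v) v := by
  have hune : (1+u) ≠ 0 := ne_of_gt hu
  have hgne : gg u v ≠ 0 := ne_of_gt hg
  have hW0 : 0 < Real.sqrt (gg u v) := Real.sqrt_pos.mpr hg
  have hWne : Real.sqrt (gg u v) ≠ 0 := ne_of_gt hW0
  have h1Wne : (1 + Real.sqrt (gg u v)) ≠ 0 := by positivity
  have hg' : HasDerivAt (fun v' => gg u v')
      (-(4*((1+u)⁻¹*(1+u)⁻¹))) v := by
    have h := (((hasDerivAt_id v).const_mul 4).mul_const (((1+u)⁻¹)^2)).const_sub 1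
    refine h.congr_deriv ?_
    rw [pow_two]; ring
  have hW : HasDerivAt (fun v' => Real.sqrt (gg u v'))
      (-(2*((1+u)⁻¹*(1+u)⁻¹))*(Real.sqrt (gg u v))⁻¹) v := by
    have h := hg'.sqrt hgne
    refine h.congr_deriv ?_
    rw [div_eq_mul_inv, mul_inv]; ring
  have hWi : HasDerivAt (fun v' => (Real.sqrt (gg u v'))⁻¹)
      ((2*((1+u)⁻¹*(1+u)⁻¹))*((Real.sqrt (gg u v))⁻¹*(Real.sqrt (gg u v))⁻¹)
        * (Real.sqrt (gg u v))⁻¹) v := by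
    have h := hW.inv hWne
    refine h.congr_deriv ?_
    rw [div_eq_mul_inv, pow_two, mul_inv]; ring
  have hB : HasDerivAt (fun v' => (1 + Real.sqrt (gg u v'))⁻¹)
      ((2*((1+u)⁻¹*(1+u)⁻¹)*(Real.sqrt (gg u v))⁻¹)*(1+Real.sqrt (gg u v))⁻¹
        * (1+Real.sqrt (gg u v))⁻¹) v := by
    have h := (hW.const_add 1).inv h1Wne
    refine h.congr_deriv ?_
    rw [div_eq_mul_inv, pow_two, mul_inv]; ring
  have hE := (hB.const_mul (-(2*T) * (1+u)⁻¹)).exp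
  have h1 := ((hasDerivAt_pow M.p v).const_mul M.c).mul_const (((1+u)⁻¹) ^ M.q)
  have h2 := h1.mul (hWi.pow M.s)
  have h3 := h2.mul (hB.pow M.e)
  have h4 := h3.mul_const (T ^ M.hh)
  have h5 := h4.mul hE
  refine h5.congr_deriv ?_
  simp only [evL, Dv, List.map_cons, List.map_nil, List.sum_cons, List.sum_nil, Mono.ev,
    Pi.mul_apply, Pi.pow_apply]
  rw [mul_pred, mul_pred]
  ring

end Stmt8Aux

namespace Stmt8Aux

lemma hasDerivAt_evL_u (L : List Mono) (T v u : ℝ) (hu : 0 < 1 + u) (hg : 0 < gg u v) :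
    HasDerivAt (fun u' => evL L T u' v) (evL (DuL L) T u v) u := by
  induction L with
  | nil => simpa [evL, DuL] using hasDerivAt_const u (0:ℝ)
  | cons M L ih =>
      have h := (hasDerivAt_ev_u M T v u hu hg).add ih
      simp only [DuL, List.flatMap_cons] at *
      rw [evL_append]
      simp only [evL_cons]
      exact h

lemma hasDerivAt_evL_v (L : List Mono) (T u v : ℝ) (hu : 0 < 1 + u) (hg : 0 < gg u v) :
    HasDerivAt (fun v' => evL L T u v') (evL (DvL L) T u v) v := by
  induction L with
  | nil => simpa [evL, DvL] using hasDerivAt_const v (0:ℝ)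
  | cons M L ih =>
      have h := (hasDerivAt_ev_v M T u v hu hg).add ih
      simp only [DvL, List.flatMap_cons] at *
      rw [evL_append]
      simp only [evL_cons]
      exact h

lemma ev_cond_u (R w : ℝ) {a : ℝ} (ha : 0 < 1 + a*R) (hgp : 0 < gg (a*R) w) :
    ∀ᶠ a' in nhds a, 0 < 1 + a'*R ∧ 0 < gg (a'*R) w := by
  have hc1 : ContinuousAt (fun a' : ℝ => 1 + a'*R) a := by fun_prop
  have hc2 : ContinuousAt (fun a' : ℝ => gg (a'*R) w) a := by
    have h3 : ContinuousAt (fun a' : ℝ => (1 + a'*R)⁻¹) a := hc1.inv₀ (ne_of_gt ha)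
    have : (fun a' : ℝ => gg (a'*R) w) = fun a' => 1 - 4 * w * ((1+a'*R)⁻¹)^2 := rfl
    rw [this]
    exact continuousAt_const.sub ((h3.pow 2).const_mul (4*w))
  exact (hc1.eventually (eventually_gt_nhds ha)).and (hc2.eventually (eventually_gt_nhds hgp))

lemma ev_cond_v (S u : ℝ) {b : ℝ} (hgp : 0 < gg u (b*S)) :
    ∀ᶠ b' in nhds b, 0 < gg u (b'*S) := by
  have hc2 : ContinuousAt (fun b' : ℝ => gg u (b'*S)) b := by
    have : (fun b' : ℝ => gg u (b'*S)) = fun b' => 1 - 4 * (b'*S) * ((1+u)⁻¹)^2 := rfl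
    rw [this]; fun_prop
  exact hc2.eventually (eventually_gt_nhds hgp)

lemma iterA (T R w : ℝ) :
    ∀ (jj : ℕ) (L : List Mono) (c₀ : ℝ) (a : ℝ), 0 < 1 + a*R → 0 < gg (a*R) w →
    iteratedDeriv jj (fun a' => c₀ * evL L T (a'*R) w) a
      = c₀ * R^jj * evL (DuL^[jj] L) T (a*R) w := by
  intro jj
  induction jj with
  | zero => intro L c₀ a _ _; simp
  | succ n ih =>
      intro L c₀ a ha hgp
      rw [iteratedDeriv_succ']
      have hev : (deriv fun a' => c₀ * evL L T (a'*R) w)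
          =ᶠ[nhds a] (fun a' => (c₀*R) * evL (DuL L) T (a'*R) w) := by
        filter_upwards [ev_cond_u R w ha hgp] with a' ha'
        obtain ⟨ha1, ha2⟩ := ha'
        have hlin : HasDerivAt (fun a'' : ℝ => a''*R) R a' := hasDerivAt_mul_const R
        have hd : HasDerivAt (fun a'' => c₀ * evL L T (a''*R) w)
            (c₀ * (evL (DuL L) T (a'*R) w * R)) a' := by
          have := ((hasDerivAt_evL_u L T w (a'*R) ha1 ha2).comp a' hlin).const_mul c₀; exact this
        rw [hd.deriv]; ring
      rw [Filter.EventuallyEq.iteratedDeriv_eq n hev, ih (DuL L) (c₀*R) a ha hgp,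
        Function.iterate_succ_apply]
      ring

lemma iterB (T S u : ℝ) (hu : 0 < 1 + u) :
    ∀ (mm : ℕ) (L : List Mono) (c₀ : ℝ) (b : ℝ), 0 < gg u (b*S) →
    iteratedDeriv mm (fun b' => c₀ * evL L T u (b'*S)) b
      = c₀ * S^mm * evL (DvL^[mm] L) T u (b*S) := by
  intro mm
  induction mm with
  | zero => intro L c₀ b _; simp
  | succ n ih =>
      intro L c₀ b hgp
      rw [iteratedDeriv_succ']
      have hev : (deriv fun b' => c₀ * evL L T u (b'*S))
          =ᶠ[nhds b] (fun b' => (c₀*S) * evL (DvL L) T u (b'*S)) := by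
        filter_upwards [ev_cond_v S u hgp] with b' hb2
        have hlin : HasDerivAt (fun b'' : ℝ => b''*S) S b' := hasDerivAt_mul_const S
        have hd : HasDerivAt (fun b'' => c₀ * evL L T u (b''*S))
            (c₀ * (evL (DvL L) T u (b'*S) * S)) b' := by
          have := ((hasDerivAt_evL_v L T u (b'*S) hu hb2).comp b' hlin).const_mul c₀; exact this
        rw [hd.deriv]; ring
      rw [Filter.EventuallyEq.iteratedDeriv_eq n hev, ih (DvL L) (c₀*S) b hgp,
        Function.iterate_succ_apply]
      ring

end Stmt8Aux

namespace Stmt8Aux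

noncomputable def CB (R₀ : ℝ) (M : Mono) : ℝ :=
  |M.c| * ((1+R₀)^2)^M.p * 2^M.s * ((2*(1+R₀))^M.hh * (M.hh.factorial : ℝ))

lemma CB_nonneg (R₀ : ℝ) (hR₀ : 0 ≤ R₀) (M : Mono) : 0 ≤ CB R₀ M := by
  unfold CB; positivity

lemma ev_bound (R₀ : ℝ) (hR₀ : 0 ≤ R₀) (M : Mono) (T u v : ℝ)
    (hT : 0 < T) (hu0 : 0 ≤ u) (huR : u ≤ R₀) (hv : 0 ≤ v) (hg4 : 1/4 ≤ gg u v) :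
    |M.ev T u v| ≤ CB R₀ M * Real.exp (-((1+R₀)⁻¹/2) * T) := by
  have hu1 : (0:ℝ) < 1 + u := by linarith
  have hR1 : (0:ℝ) < 1 + R₀ := by linarith
  set X : ℝ := (1+u)⁻¹ with hXdef
  set W : ℝ := Real.sqrt (gg u v) with hWdef
  have hX0 : 0 < X := by positivity
  have hX1 : X ≤ 1 := by
    rw [hXdef]
    rw [inv_le_one_iff₀]; right; linarith
  have hXlow : (1+R₀)⁻¹ ≤ X := by
    rw [hXdef]
    exact inv_anti₀ hu1 (by linarith)
  -- v bound
  have hvX : 4 * v * X^2 ≤ 3/4 := by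
    have hge : gg u v = 1 - 4 * v * X^2 := rfl
    linarith [hg4, hge]
  have hvb : v ≤ (1+R₀)^2 := by
    have hveq : v = (4 * v * X^2) * ((1+u)^2/4) := by
      rw [hXdef]; field_simp
    have h2 : (4 * v * X^2) * ((1+u)^2/4) ≤ (3/4) * ((1+u)^2/4) := by
      apply mul_le_mul_of_nonneg_right hvX; positivity
    have h3 : (3/4) * ((1+u)^2/4) ≤ (1+R₀)^2 := by nlinarith
    calc v = (4 * v * X^2) * ((1+u)^2/4) := hveq
      _ ≤ (3/4) * ((1+u)^2/4) := h2
      _ ≤ (1+R₀)^2 := h3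
  -- W bounds
  have hgg1 : gg u v ≤ 1 := by
    have : gg u v = 1 - 4 * v * X^2 := rfl
    rw [this]; nlinarith [sq_nonneg X]
  have hW0 : (1:ℝ)/2 ≤ W := by
    have h14 : (1/2:ℝ) = Real.sqrt (1/4) := by
      rw [show (1/4:ℝ) = (1/2)^2 by norm_num, Real.sqrt_sq (by norm_num : (0:ℝ) ≤ 1/2)]
    rw [hWdef, h14]
    exact Real.sqrt_le_sqrt hg4
  have hW1 : W ≤ 1 := by
    rw [hWdef]
    calc Real.sqrt (gg u v) ≤ Real.sqrt 1 := Real.sqrt_le_sqrt hgg1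
      _ = 1 := Real.sqrt_one
  have hWpos : (0:ℝ) < W := by linarith
  have hWi2 : W⁻¹ ≤ 2 := by
    calc W⁻¹ ≤ (1/2:ℝ)⁻¹ := inv_anti₀ (by norm_num) hW0
      _ = 2 := by norm_num
  have hB0 : (0:ℝ) < (1+W)⁻¹ := by positivity
  have hB1 : (1+W)⁻¹ ≤ 1 := by
    rw [inv_le_one_iff₀]; right; linarith
  have hBlow : (1/2:ℝ) ≤ (1+W)⁻¹ := by
    calc (1/2:ℝ) = (2:ℝ)⁻¹ := by norm_num
      _ ≤ (1+W)⁻¹ := inv_anti₀ (by linarith) (by linarith)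
  -- E bound
  have hEb : Real.exp (-(2*T) * X * (1+W)⁻¹) ≤ Real.exp (-((1+R₀)⁻¹ * T)) := by
    apply Real.exp_le_exp.mpr
    have hXB : (1+R₀)⁻¹ * (1/2) ≤ X * (1+W)⁻¹ :=
      mul_le_mul hXlow hBlow (by norm_num) (le_of_lt hX0)
    nlinarith [mul_le_mul_of_nonneg_left hXB (by positivity : (0:ℝ) ≤ 2*T)]
  -- T^h bound
  have hTh : T ^ M.hh ≤ (2*(1+R₀))^M.hh * (M.hh.factorial : ℝ) * Real.exp (((1+R₀)⁻¹/2) * T) := by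
    have hx0 : (0:ℝ) ≤ ((1+R₀)⁻¹/2) * T := by positivity
    have h1 := Real.pow_div_factorial_le_exp _ hx0 M.hh
    have hfac : (0:ℝ) < (M.hh.factorial : ℝ) := by positivity
    have h2 : (((1+R₀)⁻¹/2) * T)^M.hh ≤ (M.hh.factorial : ℝ) * Real.exp (((1+R₀)⁻¹/2) * T) := by
      rw [div_le_iff₀ hfac] at h1; linarith [h1]
    have hTeq : T = (((1+R₀)⁻¹/2) * T) * (2*(1+R₀)) := by
      have hinv : (1+R₀)⁻¹ * (1+R₀) = 1 := inv_mul_cancel₀ (ne_of_gt hR1)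
      linear_combination (-T) * hinv
    calc T ^ M.hh = ((((1+R₀)⁻¹/2) * T) * (2*(1+R₀)))^M.hh := by rw [← hTeq]
      _ = (((1+R₀)⁻¹/2) * T)^M.hh * (2*(1+R₀))^M.hh := mul_pow _ _ _
      _ ≤ ((M.hh.factorial : ℝ) * Real.exp (((1+R₀)⁻¹/2) * T)) * (2*(1+R₀))^M.hh := by
          apply mul_le_mul_of_nonneg_right h2; positivity
      _ = (2*(1+R₀))^M.hh * (M.hh.factorial : ℝ) * Real.exp (((1+R₀)⁻¹/2) * T) := by ring
  -- assemble
  have habs : |M.ev T u v| = |M.c| * v^M.p * X^M.q * (W⁻¹)^M.s * ((1+W)⁻¹)^M.e * T^M.hh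
      * Real.exp (-(2*T) * X * (1+W)⁻¹) := by
    rw [Mono.ev]
    rw [abs_mul, abs_mul, abs_mul, abs_mul, abs_mul, abs_mul]
    rw [abs_of_nonneg (pow_nonneg hv M.p),
      abs_of_nonneg (pow_nonneg (inv_nonneg.mpr (le_of_lt hu1)) M.q),
      abs_of_nonneg (pow_nonneg (inv_nonneg.mpr (Real.sqrt_nonneg (gg u v))) M.s),
      abs_of_nonneg (pow_nonneg (inv_nonneg.mpr
        (by positivity : (0:ℝ) ≤ 1 + Real.sqrt (gg u v))) M.e),
      abs_of_nonneg (pow_nonneg (le_of_lt hT) M.hh),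
      abs_of_nonneg (le_of_lt (Real.exp_pos _))]
  rw [habs]
  have step : |M.c| * v^M.p * X^M.q * (W⁻¹)^M.s * ((1+W)⁻¹)^M.e * T^M.hh
      * Real.exp (-(2*T) * X * (1+W)⁻¹)
      ≤ |M.c| * ((1+R₀)^2)^M.p * 1 * 2^M.s * 1
          * ((2*(1+R₀))^M.hh * (M.hh.factorial : ℝ) * Real.exp (((1+R₀)⁻¹/2) * T))
          * Real.exp (-((1+R₀)⁻¹ * T)) := by
    gcongr
    · exact pow_le_one₀ (le_of_lt hX0) hX1
    · exact pow_le_one₀ (le_of_lt hB0) hB1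
  refine step.trans (le_of_eq ?_)
  have heq : Real.exp (-((1+R₀)⁻¹/2) * T)
      = Real.exp (((1+R₀)⁻¹/2) * T) * Real.exp (-((1+R₀)⁻¹ * T)) := by
    rw [← Real.exp_add]; ring_nf
  rw [CB, heq]
  ring

end Stmt8Aux

namespace Stmt8Aux

noncomputable def CBL (R₀ : ℝ) (L : List Mono) : ℝ := (L.map (CB R₀)).sum

lemma CBL_nonneg (R₀ : ℝ) (hR₀ : 0 ≤ R₀) (L : List Mono) : 0 ≤ CBL R₀ L := by
  unfold CBL
  induction L with
  | nil => simp
  | cons M L ih =>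
      simp only [List.map_cons, List.sum_cons]
      have := CB_nonneg R₀ hR₀ M
      linarith

lemma evL_bound (R₀ : ℝ) (hR₀ : 0 ≤ R₀) (L : List Mono) (T u v : ℝ)
    (hT : 0 < T) (hu0 : 0 ≤ u) (huR : u ≤ R₀) (hv : 0 ≤ v) (hg4 : 1/4 ≤ gg u v) :
    |evL L T u v| ≤ CBL R₀ L * Real.exp (-((1+R₀)⁻¹/2) * T) := by
  induction L with
  | nil => simp [evL, CBL]
  | cons M L ih =>
      rw [evL_cons]
      have h1 := ev_bound R₀ hR₀ M T u v hT hu0 huR hv hg4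
      have h2 : CBL R₀ (M :: L) = CB R₀ M + CBL R₀ L := by simp [CBL, CB]
      calc |M.ev T u v + evL L T u v| ≤ |M.ev T u v| + |evL L T u v| := abs_add_le _ _
        _ ≤ CB R₀ M * Real.exp (-((1+R₀)⁻¹/2) * T) + CBL R₀ L * Real.exp (-((1+R₀)⁻¹/2) * T) := by
            linarith
        _ = CBL R₀ (M :: L) * Real.exp (-((1+R₀)⁻¹/2) * T) := by rw [h2]; ring

lemma ev_zero (M : Mono) (T : ℝ) :
    M.ev T 0 0 = (M.c * 0^M.p * (2:ℝ)⁻¹^M.e) * T^M.hh * Real.exp (-T) := by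
  have hgg : gg 0 0 = 1 := by norm_num [gg]
  have hexp : -(2*T) * ((1:ℝ)+0)⁻¹ * (1 + (1:ℝ))⁻¹ = -T := by norm_num; ring
  rw [Mono.ev, hgg, Real.sqrt_one, hexp]
  norm_num

noncomputable def CsL (L : List Mono) (h : ℕ) : ℝ :=
  (L.map (fun M => if M.hh = h then M.c * 0^M.p * (2:ℝ)⁻¹^M.e else 0)).sum

lemma evL_zero (L : List Mono) (n : ℕ) (hL : ∀ M ∈ L, M.hh < n) (T : ℝ) :
    evL L T 0 0 = Real.exp (-T) * ∑ h ∈ Finset.range n, CsL L h * T^h := by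
  induction L with
  | nil => simp [evL, CsL]
  | cons M L ih =>
      rw [evL_cons, ev_zero, ih (fun M' hM' => hL M' (List.mem_cons_of_mem _ hM'))]
      have hM : M.hh < n := hL M List.mem_cons_self
      have hsum : ∀ h, CsL (M::L) h
          = (if M.hh = h then M.c * 0^M.p * (2:ℝ)⁻¹^M.e else 0) + CsL L h := by
        intro h; simp [CsL]
      simp only [hsum, add_mul]
      rw [Finset.sum_add_distrib]
      have : ∑ h ∈ Finset.range n,
          (if M.hh = h then M.c * 0^M.p * (2:ℝ)⁻¹^M.e else 0) * T^h
          = (M.c * 0^M.p * (2:ℝ)⁻¹^M.e) * T^M.hh := by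
        rw [Finset.sum_congr rfl (fun h _ => ite_mul _ _ _ (T^h))]
        simp only [zero_mul]
        rw [Finset.sum_ite_eq (Finset.range n) M.hh (fun h => (M.c * 0^M.p * (2:ℝ)⁻¹^M.e) * T^h)]
        simp [Finset.mem_range.mpr hM]
      rw [this]
      ring

lemma h_bound_Du (L : List Mono) (n : ℕ) (hL : ∀ M ∈ L, M.hh ≤ n) :
    ∀ M' ∈ DuL L, M'.hh ≤ n + 1 := by
  intro M' hM'
  rw [DuL, List.mem_flatMap] at hM'
  obtain ⟨M, hM, hM'⟩ := hM'
  have := hL M hM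
  simp [Du] at hM'
  rcases hM' with h|h|h|h|h <;> subst h <;> simp <;> omega

lemma h_bound_Dv (L : List Mono) (n : ℕ) (hL : ∀ M ∈ L, M.hh ≤ n) :
    ∀ M' ∈ DvL L, M'.hh ≤ n + 1 := by
  intro M' hM'
  rw [DvL, List.mem_flatMap] at hM'
  obtain ⟨M, hM, hM'⟩ := hM'
  have := hL M hM
  simp [Dv] at hM'
  rcases hM' with h|h|h|h <;> subst h <;> simp <;> omega

lemma h_bound_iter_Du (L : List Mono) (n : ℕ) (hL : ∀ M ∈ L, M.hh ≤ n) :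
    ∀ (k : ℕ), ∀ M' ∈ DuL^[k] L, M'.hh ≤ n + k := by
  intro k
  induction k generalizing L n with
  | zero => simpa using hL
  | succ k ih =>
      rw [Function.iterate_succ_apply]
      intro M' hM'
      have := ih (DuL L) (n+1) (h_bound_Du L n hL) M' hM'
      omega

lemma h_bound_iter_Dv (L : List Mono) (n : ℕ) (hL : ∀ M ∈ L, M.hh ≤ n) :
    ∀ (k : ℕ), ∀ M' ∈ DvL^[k] L, M'.hh ≤ n + k := by
  intro k
  induction k generalizing L n with
  | zero => simpa using hL
  | succ k ih =>
      rw [Function.iterate_succ_apply]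
      intro M' hM'
      have := ih (DvL L) (n+1) (h_bound_Dv L n hL) M' hM'
      omega

end Stmt8Aux


namespace Stmt8Aux

lemma gg_eq (σ σ₁ σ₂ r a b : ℝ) :
    gg (a * r ^ (2*(σ₂-σ₁))) (b * r ^ (2*(σ-2*σ₁)))
      = 1 - 4*b*r ^ (2*(σ-2*σ₁)) * (Gamma1 σ₁ σ₂ r a)^2 := by
  unfold gg Gamma1
  ring

lemma K11_eq (σ σ₁ σ₂ t r : ℝ) (a b : ℝ) :
    K11 σ σ₁ σ₂ t r a b
      = (r ^ (2*σ₁))⁻¹ * (Mono.mk 1 0 1 1 0 0).ev (r ^ (2*(σ-σ₁)) * t)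
          (a * r ^ (2*(σ₂-σ₁))) (b * r ^ (2*(σ-2*σ₁))) := by
  have hW : Real.sqrt (gg (a * r ^ (2*(σ₂-σ₁))) (b * r ^ (2*(σ-2*σ₁))))
      = Gamma2 σ σ₁ σ₂ r a b := by
    rw [gg_eq, Gamma2]
  simp only [K11, Gfun, lam1, Gamma1, Mono.ev, pow_zero, pow_one, one_mul, mul_one, hW]
  rw [show (-2 * r ^ (2*(σ-σ₁)) * (1 + a * r ^ (2*(σ₂-σ₁)))⁻¹
        * (1 + Gamma2 σ σ₁ σ₂ r a b)⁻¹) * t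
      = -(2*(r ^ (2*(σ-σ₁)) * t)) * (1 + a * r ^ (2*(σ₂-σ₁)))⁻¹
        * (1 + Gamma2 σ σ₁ σ₂ r a b)⁻¹ from by ring]
  rw [mul_inv, mul_inv]
  ring

end Stmt8Aux


theorem stmt8 (σ σ₁ σ₂ εs : ℝ) (hσ : 1 ≤ σ) (hσ₁ : 0 ≤ σ₁) (h12 : σ₁ < σ / 2)
    (h22 : σ / 2 < σ₂) (h2σ : σ₂ ≤ σ) (hε : 0 < εs)
    (hΓ : ∀ r ∈ Set.Ioc (0:ℝ) εs, ∀ a ∈ Set.Icc (0:ℝ) 1, ∀ b ∈ Set.Icc (0:ℝ) 1,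
      (1:ℝ)/2 ≤ Gamma2 σ σ₁ σ₂ r a b)
    (j m : ℕ) :
    (∃ C > 0, ∃ c > 0, ∀ t > 0, ∀ r ∈ Set.Ioc (0:ℝ) εs, ∀ a ∈ Set.Icc (0:ℝ) 1,
      ∀ b ∈ Set.Icc (0:ℝ) 1,
      |pderiv2 j m (fun a' b' => K11 σ σ₁ σ₂ t r a' b') a b|
        ≤ C * Real.exp (-c * r ^ (2*(σ-σ₁)) * t)
            * r ^ (-(2*σ₁) + 2*(j:ℝ)*(σ₂-σ₁) + 2*(m:ℝ)*(σ-2*σ₁))) ∧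
    (∃ Cs : ℕ → ℝ, ∀ r ∈ Set.Ioc (0:ℝ) εs, ∀ t > (0:ℝ),
      pderiv2 j m (fun a' b' => K11 σ σ₁ σ₂ t r a' b') 0 0
        = Real.exp (-(r ^ (2*(σ-σ₁))) * t)
            * r ^ (-(2*σ₁) + 2*(j:ℝ)*(σ₂-σ₁) + 2*(m:ℝ)*(σ-2*σ₁))
            * ∑ h ∈ Finset.range (j+m+1), Cs h * (r ^ (2*(σ-σ₁)) * t) ^ h) := by
  classical
  set L0 : List Stmt8Aux.Mono := [⟨1,0,1,1,0,0⟩] with hL0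
  set LJM : List Stmt8Aux.Mono := Stmt8Aux.DvL^[m] (Stmt8Aux.DuL^[j] L0) with hLJM
  -- generic computation of the mixed derivative
  have hcomp : ∀ t > (0:ℝ), ∀ r ∈ Set.Ioc (0:ℝ) εs, ∀ a b : ℝ,
      0 < 1 + a * r ^ (2*(σ₂-σ₁)) →
      0 < Stmt8Aux.gg (a * r ^ (2*(σ₂-σ₁))) (b * r ^ (2*(σ-2*σ₁))) →
      pderiv2 j m (fun a' b' => K11 σ σ₁ σ₂ t r a' b') a b
        = (r ^ (2*σ₁))⁻¹ * (r ^ (2*(σ₂-σ₁)))^j * (r ^ (2*(σ-2*σ₁)))^m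
            * Stmt8Aux.evL LJM (r ^ (2*(σ-σ₁)) * t)
                (a * r ^ (2*(σ₂-σ₁))) (b * r ^ (2*(σ-2*σ₁))) := by
    intro t ht r hr a b h1aR hgab
    set T := r ^ (2*(σ-σ₁)) * t with hT
    set R := r ^ (2*(σ₂-σ₁)) with hR
    set S := r ^ (2*(σ-2*σ₁)) with hS
    have hfun : ∀ a' b' : ℝ, K11 σ σ₁ σ₂ t r a' b'
        = (r ^ (2*σ₁))⁻¹ * Stmt8Aux.evL L0 T (a'*R) (b'*S) := by
      intro a' b'
      rw [Stmt8Aux.K11_eq σ σ₁ σ₂ t r a' b']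
      simp [Stmt8Aux.evL, hL0, hT, hR, hS]
    simp only [pderiv2, hfun]
    have hev : (fun b' => iteratedDeriv j
          (fun a' => (r ^ (2*σ₁))⁻¹ * Stmt8Aux.evL L0 T (a'*R) (b'*S)) a)
        =ᶠ[nhds b] (fun b' => ((r ^ (2*σ₁))⁻¹ * R^j)
            * Stmt8Aux.evL (Stmt8Aux.DuL^[j] L0) T (a*R) (b'*S)) := by
      filter_upwards [Stmt8Aux.ev_cond_v S (a*R) hgab] with b' hb'
      exact Stmt8Aux.iterA T R (b'*S) j L0 ((r ^ (2*σ₁))⁻¹) a h1aR hb'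
    rw [Filter.EventuallyEq.iteratedDeriv_eq m hev,
      Stmt8Aux.iterB T S (a*R) h1aR m (Stmt8Aux.DuL^[j] L0) ((r ^ (2*σ₁))⁻¹ * R^j) b hgab]
  -- power identity
  have hpow : ∀ r : ℝ, 0 < r →
      (r ^ (2*σ₁))⁻¹ * (r ^ (2*(σ₂-σ₁)))^j * (r ^ (2*(σ-2*σ₁)))^m
        = r ^ (-(2*σ₁) + 2*(j:ℝ)*(σ₂-σ₁) + 2*(m:ℝ)*(σ-2*σ₁)) := by
    intro r hr0
    rw [← Real.rpow_natCast (r ^ (2*(σ₂-σ₁))) j, ← Real.rpow_natCast (r ^ (2*(σ-2*σ₁))) m,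
      ← Real.rpow_mul (le_of_lt hr0), ← Real.rpow_mul (le_of_lt hr0),
      ← Real.rpow_neg (le_of_lt hr0), ← Real.rpow_add hr0, ← Real.rpow_add hr0]
    congr 1
    ring
  constructor
  · -- the uniform bound
    set R₀ := εs ^ (2*(σ₂-σ₁)) with hR₀def
    have hR₀pos : 0 < R₀ := Real.rpow_pos_of_pos hε _
    refine ⟨Stmt8Aux.CBL R₀ LJM + 1,
      by have := Stmt8Aux.CBL_nonneg R₀ (le_of_lt hR₀pos) LJM; linarith,
      (1+R₀)⁻¹/2, div_pos (inv_pos.mpr (by linarith)) (by norm_num), ?_⟩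
    intro t ht r hr a ha b hb
    obtain ⟨hr0, hrε⟩ := hr
    obtain ⟨ha0, ha1⟩ := ha
    obtain ⟨hb0, hb1⟩ := hb
    have hRpos : 0 < r ^ (2*(σ₂-σ₁)) := Real.rpow_pos_of_pos hr0 _
    have hSpos : 0 < r ^ (2*(σ-2*σ₁)) := Real.rpow_pos_of_pos hr0 _
    have hCrpos : 0 < (r ^ (2*σ₁))⁻¹ := by positivity
    have hTpos : 0 < r ^ (2*(σ-σ₁)) * t := by positivity
    have h1aR : 0 < 1 + a * r ^ (2*(σ₂-σ₁)) := by positivity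
    have hg4 : 1/4 ≤ Stmt8Aux.gg (a * r ^ (2*(σ₂-σ₁))) (b * r ^ (2*(σ-2*σ₁))) := by
      rw [Stmt8Aux.gg_eq σ σ₁ σ₂ r a b]
      have h2 := hΓ r ⟨hr0, hrε⟩ a ⟨ha0, ha1⟩ b ⟨hb0, hb1⟩
      rw [Gamma2, Real.le_sqrt' (by norm_num : (0:ℝ) < 1/2)] at h2
      calc (1/4:ℝ) = (1/2)^2 := by norm_num
        _ ≤ _ := h2
    have hgab : 0 < Stmt8Aux.gg (a * r ^ (2*(σ₂-σ₁))) (b * r ^ (2*(σ-2*σ₁))) := by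
      linarith
    rw [hcomp t ht r ⟨hr0, hrε⟩ a b h1aR hgab]
    have huR : a * r ^ (2*(σ₂-σ₁)) ≤ R₀ := by
      have h1 : r ^ (2*(σ₂-σ₁)) ≤ R₀ := by
        rw [hR₀def]
        exact Real.rpow_le_rpow (le_of_lt hr0) hrε (by nlinarith)
      nlinarith
    have hbound := Stmt8Aux.evL_bound R₀ (le_of_lt hR₀pos) LJM
      (r ^ (2*(σ-σ₁)) * t) (a * r ^ (2*(σ₂-σ₁))) (b * r ^ (2*(σ-2*σ₁)))
      hTpos (by positivity) huR (by positivity) hg4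
    rw [abs_mul, abs_of_nonneg (by positivity :
      (0:ℝ) ≤ (r ^ (2*σ₁))⁻¹ * (r ^ (2*(σ₂-σ₁)))^j * (r ^ (2*(σ-2*σ₁)))^m)]
    rw [hpow r hr0]
    have hrpowpos : (0:ℝ) < r ^ (-(2*σ₁) + 2*(j:ℝ)*(σ₂-σ₁) + 2*(m:ℝ)*(σ-2*σ₁)) :=
      Real.rpow_pos_of_pos hr0 _
    have hexpeq : Real.exp (-((1+R₀)⁻¹/2) * (r ^ (2*(σ-σ₁)) * t))
        = Real.exp (-((1+R₀)⁻¹/2) * r ^ (2*(σ-σ₁)) * t) := by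
      congr 1; ring
    calc r ^ (-(2*σ₁) + 2*(j:ℝ)*(σ₂-σ₁) + 2*(m:ℝ)*(σ-2*σ₁))
          * |Stmt8Aux.evL LJM (r ^ (2*(σ-σ₁)) * t) (a * r ^ (2*(σ₂-σ₁))) (b * r ^ (2*(σ-2*σ₁)))|
        ≤ r ^ (-(2*σ₁) + 2*(j:ℝ)*(σ₂-σ₁) + 2*(m:ℝ)*(σ-2*σ₁))
          * (Stmt8Aux.CBL R₀ LJM * Real.exp (-((1+R₀)⁻¹/2) * (r ^ (2*(σ-σ₁)) * t))) := by
          exact mul_le_mul_of_nonneg_left hbound (le_of_lt hrpowpos)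
      _ ≤ (Stmt8Aux.CBL R₀ LJM + 1) * Real.exp (-((1+R₀)⁻¹/2) * r ^ (2*(σ-σ₁)) * t)
          * r ^ (-(2*σ₁) + 2*(j:ℝ)*(σ₂-σ₁) + 2*(m:ℝ)*(σ-2*σ₁)) := by
          rw [← hexpeq]
          have h9 : Stmt8Aux.CBL R₀ LJM ≤ Stmt8Aux.CBL R₀ LJM + 1 := by linarith
          nlinarith [Real.exp_pos (-((1+R₀)⁻¹/2) * (r ^ (2*(σ-σ₁)) * t)),
            Stmt8Aux.CBL_nonneg R₀ (le_of_lt hR₀pos) LJM, hrpowpos]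
  · -- exact value at (0,0)
    refine ⟨Stmt8Aux.CsL LJM, ?_⟩
    intro r hr t ht
    obtain ⟨hr0, hrε⟩ := hr
    have h1aR : 0 < 1 + (0:ℝ) * r ^ (2*(σ₂-σ₁)) := by norm_num
    have hgab : 0 < Stmt8Aux.gg ((0:ℝ) * r ^ (2*(σ₂-σ₁))) ((0:ℝ) * r ^ (2*(σ-2*σ₁))) := by
      norm_num [Stmt8Aux.gg]
    rw [hcomp t ht r ⟨hr0, hrε⟩ 0 0 h1aR hgab]
    have hhb : ∀ M ∈ LJM, M.hh < j + m + 1 := by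
      intro M hM
      have h0 : ∀ M' ∈ L0, M'.hh ≤ 0 := by
        intro M' hM'
        simp [hL0] at hM'
        rw [hM']
      have h1 := Stmt8Aux.h_bound_iter_Du L0 0 h0 j
      have h2 := Stmt8Aux.h_bound_iter_Dv (Stmt8Aux.DuL^[j] L0) j
        (by simpa using h1) m M (by rw [hLJM] at hM; exact hM)
      omega
    rw [show ((0:ℝ) * r ^ (2*(σ₂-σ₁))) = 0 from zero_mul _,
      show ((0:ℝ) * r ^ (2*(σ-2*σ₁))) = 0 from zero_mul _]
    rw [Stmt8Aux.evL_zero LJM (j+m+1) hhb (r ^ (2*(σ-σ₁)) * t)]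
    rw [hpow r hr0]
    rw [show Real.exp (-(r ^ (2*(σ-σ₁)) * t)) = Real.exp (-(r ^ (2*(σ-σ₁))) * t) from by
      congr 1; ring]
    ring
end

section
/- Let K̂₀¹(t,r,a,b) := G(r,a,b)^{-1} λ₁⁰(r,a,b) e^{λ₂⁰(r,a,b)t}. Then for all j, m ∈ ℕ, |∂^{j+m}/(∂aʲ ∂bᵐ) K̂₀¹(t,r,a,b)| ≤ C e^{-c r^{2σ₁}t} r^{2(σ-2σ₁)+2j(σ₂-σ₁)+2m(σ-2σ₁)} for all (r,a,b) ∈ (0,ε*] × [0,1]² and t > 0. -/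
open Real Set

noncomputable def K01 (σ σ₁ σ₂ t r a b : ℝ) : ℝ :=
  (Gfun σ σ₁ σ₂ r a b)⁻¹ * lam1 σ σ₁ σ₂ r a b * Real.exp (lam2 σ σ₁ σ₂ r a b * t)

namespace SK

noncomputable def n0 (p : ℝ × ℝ) : ℝ := 1 - 4*p.2*((1+p.1)⁻¹)^2
noncomputable def Gm (p : ℝ × ℝ) : ℝ := Real.sqrt (n0 p)
noncomputable def mu0 (p : ℝ × ℝ) : ℝ := (1/2) * (1+p.1) * (1+Gm p)
noncomputable def ps0 (p : ℝ × ℝ) : ℝ := -2 * ((1+p.1)⁻¹)^2 * (Gm p)⁻¹ * (1+Gm p)⁻¹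
def U0 : Set (ℝ × ℝ) := {p | -2⁻¹ < p.1 ∧ 1/9 < n0 p}
noncomputable def Phi0 (α β s : ℝ) : ℝ := ps0 (α,β) * Real.exp (-(mu0 (α,β)) * s)

noncomputable def pa (f : ℝ × ℝ → ℝ) (p : ℝ × ℝ) : ℝ := deriv (fun x => f (x, p.2)) p.1
noncomputable def pb (f : ℝ × ℝ → ℝ) (p : ℝ × ℝ) : ℝ := deriv (fun y => f (p.1, y)) p.2

def Nice (f : ℝ × ℝ → ℝ) (p : ℝ × ℝ) : Prop := ∀ n : ℕ, ContDiffAt ℝ n f p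
def NiceU (f : ℝ × ℝ → ℝ) : Prop := ∀ p ∈ U0, Nice f p

lemma isOpen_U0 : IsOpen U0 := by
  have h1 : IsOpen {p : ℝ × ℝ | -2⁻¹ < p.1} := isOpen_lt continuous_const continuous_fst
  have h2 : ContinuousOn n0 {p : ℝ × ℝ | -2⁻¹ < p.1} := by
    intro p hp
    have hne : (1:ℝ) + p.1 ≠ 0 := by simp only [mem_setOf_eq] at hp; nlinarith
    exact (ContinuousAt.continuousWithinAt (by
      have : ContinuousAt (fun p : ℝ × ℝ => 1 - 4*p.2*((1+p.1)⁻¹)^2) p := by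
        refine ContinuousAt.sub continuousAt_const ?_
        refine ContinuousAt.mul (ContinuousAt.mul continuousAt_const continuousAt_snd) ?_
        exact (((continuousAt_const.add continuousAt_fst).inv₀ hne).pow 2)
      exact this))
  have : U0 = {p : ℝ × ℝ | -2⁻¹ < p.1} ∩ n0 ⁻¹' (Set.Ioi (1/9)) := by
    ext p; simp [U0, Set.mem_Ioi, and_comm]
  rw [this]
  exact h2.isOpen_inter_preimage h1 isOpen_Ioi

lemma nice_pa {f : ℝ × ℝ → ℝ} {p : ℝ × ℝ} (hf : Nice f p) : Nice (pa f) p := by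
  intro n
  have h1 : ContDiffAt ℝ (n+1 : ℕ) f p := hf (n+1)
  have hA : ContDiffAt ℝ n (fun q => (fderiv ℝ f q) ((1:ℝ),(0:ℝ))) p := by
    have hfd : ContDiffAt ℝ n (fderiv ℝ f) p :=
      h1.fderiv_right (by exact_mod_cast le_refl (n+1 : ℕ))
    exact ((ContinuousLinearMap.apply ℝ ℝ ((1:ℝ),(0:ℝ))).contDiff.contDiffAt).comp p hfd
  have hev : ∀ᶠ q in nhds p, DifferentiableAt ℝ f q := by
    have h2 : ContDiffAt ℝ (1:ℕ) f p := hf 1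
    filter_upwards [h2.eventually (by simp)] with q hq
    exact hq.differentiableAt (by simp)
  refine hA.congr_of_eventuallyEq ?_
  filter_upwards [hev] with q hq
  have hg : HasDerivAt (fun x : ℝ => (x, q.2)) ((1:ℝ),(0:ℝ)) q.1 :=
    (hasDerivAt_id q.1).prodMk (hasDerivAt_const q.1 q.2)
  have hcomp : HasDerivAt (fun x => f (x, q.2)) ((fderiv ℝ f q) ((1:ℝ),(0:ℝ))) q.1 := by
    have hq' : HasFDerivAt f (fderiv ℝ f q) q := hq.hasFDerivAt
    have := hq'.comp_hasDerivAt q.1 (by simpa using hg)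
    exact this
  exact hcomp.deriv

lemma nice_pb {f : ℝ × ℝ → ℝ} {p : ℝ × ℝ} (hf : Nice f p) : Nice (pb f) p := by
  intro n
  have h1 : ContDiffAt ℝ (n+1 : ℕ) f p := hf (n+1)
  have hA : ContDiffAt ℝ n (fun q => (fderiv ℝ f q) ((0:ℝ),(1:ℝ))) p := by
    have hfd : ContDiffAt ℝ n (fderiv ℝ f) p :=
      h1.fderiv_right (by exact_mod_cast le_refl (n+1 : ℕ))
    exact ((ContinuousLinearMap.apply ℝ ℝ ((0:ℝ),(1:ℝ))).contDiff.contDiffAt).comp p hfd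
  have hev : ∀ᶠ q in nhds p, DifferentiableAt ℝ f q := by
    have h2 : ContDiffAt ℝ (1:ℕ) f p := hf 1
    filter_upwards [h2.eventually (by simp)] with q hq
    exact hq.differentiableAt (by simp)
  refine hA.congr_of_eventuallyEq ?_
  filter_upwards [hev] with q hq
  have hg : HasDerivAt (fun y : ℝ => (q.1, y)) ((0:ℝ),(1:ℝ)) q.2 :=
    (hasDerivAt_const q.2 q.1).prodMk (hasDerivAt_id q.2)
  have hcomp : HasDerivAt (fun y => f (q.1, y)) ((fderiv ℝ f q) ((0:ℝ),(1:ℝ))) q.2 := by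
    have hq' : HasFDerivAt f (fderiv ℝ f q) q := hq.hasFDerivAt
    have := hq'.comp_hasDerivAt q.2 (by simpa using hg)
    exact this
  exact hcomp.deriv

lemma sliceA {f : ℝ × ℝ → ℝ} {p : ℝ × ℝ} (hf : DifferentiableAt ℝ f p) :
    HasDerivAt (fun x => f (x, p.2)) (pa f p) p.1 := by
  have hin : DifferentiableAt ℝ (fun x : ℝ => (x, p.2)) p.1 :=
    differentiableAt_id.prodMk (differentiableAt_const _)
  have hf' : DifferentiableAt ℝ f (p.1, p.2) := by rwa [Prod.mk.eta]
  have hs : DifferentiableAt ℝ (fun x : ℝ => f (x, p.2)) p.1 := hf'.comp p.1 hin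
  exact hs.hasDerivAt

lemma sliceB {f : ℝ × ℝ → ℝ} {p : ℝ × ℝ} (hf : DifferentiableAt ℝ f p) :
    HasDerivAt (fun y => f (p.1, y)) (pb f p) p.2 := by
  have hin : DifferentiableAt ℝ (fun y : ℝ => (p.1, y)) p.2 :=
    (differentiableAt_const _).prodMk differentiableAt_id
  have hf' : DifferentiableAt ℝ f (p.1, p.2) := by rwa [Prod.mk.eta]
  have hs : DifferentiableAt ℝ (fun y : ℝ => f (p.1, y)) p.2 := hf'.comp p.2 hin
  exact hs.hasDerivAt


lemma U0_facts {p : ℝ × ℝ} (hp : p ∈ U0) :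
    (1:ℝ) + p.1 ≠ 0 ∧ n0 p ≠ 0 ∧ Gm p ≠ 0 ∧ (1:ℝ) + Gm p ≠ 0 := by
  obtain ⟨h1, h2⟩ := hp
  have hG : 0 < Gm p := Real.sqrt_pos.mpr (by linarith)
  refine ⟨by nlinarith, by linarith, by linarith, by positivity⟩

lemma nice_n0 {p : ℝ × ℝ} (hp : p ∈ U0) : Nice n0 p := by
  intro n
  have hne : (1:ℝ) + p.1 ≠ 0 := (U0_facts hp).1
  exact contDiffAt_const.sub ((contDiffAt_const.mul contDiffAt_snd).mul
    (((contDiffAt_const.add contDiffAt_fst).inv hne).pow 2))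

lemma nice_Gm {p : ℝ × ℝ} (hp : p ∈ U0) : Nice Gm p := by
  intro n
  exact (nice_n0 hp n).sqrt (U0_facts hp).2.1

lemma nice_mu0 {p : ℝ × ℝ} (hp : p ∈ U0) : Nice mu0 p := by
  intro n
  exact (contDiffAt_const.mul (contDiffAt_const.add contDiffAt_fst)).mul
    (contDiffAt_const.add (nice_Gm hp n))

lemma nice_ps0 {p : ℝ × ℝ} (hp : p ∈ U0) : Nice ps0 p := by
  intro n
  obtain ⟨h1, h2, h3, h4⟩ := U0_facts hp
  exact ((contDiffAt_const.mul (((contDiffAt_const.add contDiffAt_fst).inv h1).pow 2)).mul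
    ((nice_Gm hp n).inv h3)).mul ((contDiffAt_const.add (nice_Gm hp n)).inv h4)


noncomputable def evalRep (c : ℕ → ℝ × ℝ → ℝ) (N : ℕ) (p : ℝ × ℝ) (s : ℝ) : ℝ :=
  ∑ k ∈ Finset.range N, c k p * s^k * Real.exp (-(mu0 p) * s)

def RepF (F : ℝ → ℝ → ℝ → ℝ) (c : ℕ → ℝ × ℝ → ℝ) (N : ℕ) : Prop :=
  ∀ α β, (α, β) ∈ U0 → ∀ s, F α β s = evalRep c N (α, β) s

lemma sum_shift (N : ℕ) (g h : ℕ → ℝ) (s e w : ℝ) :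
    ∑ x ∈ Finset.range (N+1),
      ((if x < N then g x else 0) - if x = 0 then 0 else h (x-1) * w) * s^x * e
    = ∑ i ∈ Finset.range N, (g i * s^i * e + h i * s^i * (e * (-w * s))) := by
  have h1 : ∀ x : ℕ, ((if x < N then g x else 0) - if x = 0 then 0 else h (x-1) * w) * s^x * e
      = (if x < N then g x else 0) * s^x * e - (if x = 0 then 0 else h (x-1) * w) * s^x * e := by
    intro x; ring
  simp only [h1]
  rw [Finset.sum_sub_distrib]
  have h2 : ∑ x ∈ Finset.range (N+1), (if x < N then g x else 0) * s^x * e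
      = ∑ i ∈ Finset.range N, g i * s^i * e := by
    rw [Finset.sum_range_succ]
    simp only [lt_irrefl, if_false, zero_mul, add_zero]
    exact Finset.sum_congr rfl fun x hx => by
      rw [if_pos (Finset.mem_range.mp hx)]
  have h3 : ∑ x ∈ Finset.range (N+1), (if x = 0 then 0 else h (x-1) * w) * s^x * e
      = ∑ i ∈ Finset.range N, h i * w * s^(i+1) * e := by
    rw [Finset.sum_range_succ']
    simp
  rw [h2, h3, ← Finset.sum_sub_distrib]
  exact Finset.sum_congr rfl fun i _ => by ring

lemma stepA {F : ℝ → ℝ → ℝ → ℝ} {c : ℕ → ℝ × ℝ → ℝ} {N : ℕ}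
    (hc : ∀ k, NiceU (c k)) (hF : RepF F c N) :
    ∃ c' : ℕ → ℝ × ℝ → ℝ, (∀ k, NiceU (c' k)) ∧
      RepF (fun α β s => deriv (fun x => F x β s) α) c' (N+1) := by
  refine ⟨fun k p => (if k < N then pa (c k) p else 0) -
      (if k = 0 then 0 else c (k-1) p * pa mu0 p), ?_, ?_⟩
  · intro k p hp n
    have h1 : ContDiffAt ℝ n (fun p => if k < N then pa (c k) p else 0) p := by
      split_ifs
      · exact nice_pa (hc k p hp) n
      · exact contDiffAt_const
    have h2 : ContDiffAt ℝ n (fun p => if k = 0 then 0 else c (k-1) p * pa mu0 p) p := by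
      split_ifs
      · exact contDiffAt_const
      · exact (hc (k-1) p hp n).mul (nice_pa (nice_mu0 hp) n)
    exact h1.sub h2
  · intro α β hU s
    show deriv (fun x => F x β s) α = _
    have hev : ∀ᶠ x in nhds α, (x, β) ∈ U0 := by
      have hU' : U0 ∈ nhds (α, β) := isOpen_U0.mem_nhds hU
      exact (continuous_id.prodMk continuous_const).continuousAt.preimage_mem_nhds hU'
    have heq : (fun x => F x β s) =ᶠ[nhds α] (fun x => evalRep c N (x, β) s) :=
      hev.mono fun x hx => hF x β hx s
    rw [heq.deriv_eq]
    -- now compute the derivative of the sum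
    have hterm : ∀ k ∈ Finset.range N, HasDerivAt (fun x => c k (x, β) * s^k *
        Real.exp (-(mu0 (x, β)) * s))
        (pa (c k) (α, β) * s^k * Real.exp (-(mu0 (α, β)) * s) +
          c k (α, β) * s^k * (Real.exp (-(mu0 (α, β)) * s) * (-(pa mu0 (α, β)) * s))) α := by
      intro k _
      have hck : HasDerivAt (fun x => c k (x, β)) (pa (c k) (α, β)) α :=
        sliceA ((hc k (α, β) hU 1).differentiableAt (by simp))
      have hmu : HasDerivAt (fun x => mu0 (x, β)) (pa mu0 (α, β)) α :=
        sliceA ((nice_mu0 hU 1).differentiableAt (by simp))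
      have hexp : HasDerivAt (fun x => Real.exp (-(mu0 (x, β)) * s))
          (Real.exp (-(mu0 (α, β)) * s) * (-(pa mu0 (α, β)) * s)) α :=
        (hmu.neg.mul_const s).exp
      exact (hck.mul_const (s^k)).mul hexp
    have hsum := HasDerivAt.fun_sum hterm
    rw [show (fun x => evalRep c N (x, β) s) = (fun x => ∑ k ∈ Finset.range N,
      c k (x, β) * s^k * Real.exp (-(mu0 (x, β)) * s)) from rfl, hsum.deriv]
    exact (sum_shift N (fun i => pa (c i) (α, β)) (fun i => c i (α, β)) s
      (Real.exp (-(mu0 (α, β)) * s)) (pa mu0 (α, β))).symm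

lemma stepB {F : ℝ → ℝ → ℝ → ℝ} {c : ℕ → ℝ × ℝ → ℝ} {N : ℕ}
    (hc : ∀ k, NiceU (c k)) (hF : RepF F c N) :
    ∃ c' : ℕ → ℝ × ℝ → ℝ, (∀ k, NiceU (c' k)) ∧
      RepF (fun α β s => deriv (fun y => F α y s) β) c' (N+1) := by
  refine ⟨fun k p => (if k < N then pb (c k) p else 0) -
      (if k = 0 then 0 else c (k-1) p * pb mu0 p), ?_, ?_⟩
  · intro k p hp n
    have h1 : ContDiffAt ℝ n (fun p => if k < N then pb (c k) p else 0) p := by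
      split_ifs
      · exact nice_pb (hc k p hp) n
      · exact contDiffAt_const
    have h2 : ContDiffAt ℝ n (fun p => if k = 0 then 0 else c (k-1) p * pb mu0 p) p := by
      split_ifs
      · exact contDiffAt_const
      · exact (hc (k-1) p hp n).mul (nice_pb (nice_mu0 hp) n)
    exact h1.sub h2
  · intro α β hU s
    show deriv (fun y => F α y s) β = _
    have hev : ∀ᶠ y in nhds β, (α, y) ∈ U0 := by
      have hU' : U0 ∈ nhds (α, β) := isOpen_U0.mem_nhds hU
      exact (continuous_const.prodMk continuous_id).continuousAt.preimage_mem_nhds hU'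
    have heq : (fun y => F α y s) =ᶠ[nhds β] (fun y => evalRep c N (α, y) s) :=
      hev.mono fun y hy => hF α y hy s
    rw [heq.deriv_eq]
    have hterm : ∀ k ∈ Finset.range N, HasDerivAt (fun y => c k (α, y) * s^k *
        Real.exp (-(mu0 (α, y)) * s))
        (pb (c k) (α, β) * s^k * Real.exp (-(mu0 (α, β)) * s) +
          c k (α, β) * s^k * (Real.exp (-(mu0 (α, β)) * s) * (-(pb mu0 (α, β)) * s))) β := by
      intro k _
      have hck : HasDerivAt (fun y => c k (α, y)) (pb (c k) (α, β)) β :=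
        sliceB ((hc k (α, β) hU 1).differentiableAt (by simp))
      have hmu : HasDerivAt (fun y => mu0 (α, y)) (pb mu0 (α, β)) β :=
        sliceB ((nice_mu0 hU 1).differentiableAt (by simp))
      have hexp : HasDerivAt (fun y => Real.exp (-(mu0 (α, y)) * s))
          (Real.exp (-(mu0 (α, β)) * s) * (-(pb mu0 (α, β)) * s)) β :=
        (hmu.neg.mul_const s).exp
      exact (hck.mul_const (s^k)).mul hexp
    have hsum := HasDerivAt.fun_sum hterm
    rw [show (fun y => evalRep c N (α, y) s) = (fun y => ∑ k ∈ Finset.range N,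
      c k (α, y) * s^k * Real.exp (-(mu0 (α, y)) * s)) from rfl, hsum.deriv]
    exact (sum_shift N (fun i => pb (c i) (α, β)) (fun i => c i (α, β)) s
      (Real.exp (-(mu0 (α, β)) * s)) (pb mu0 (α, β))).symm

/-- representation of all mixed partials of Phi0 -/
lemma repPhi (j m : ℕ) : ∃ (N : ℕ) (c : ℕ → ℝ × ℝ → ℝ), (∀ k, NiceU (c k)) ∧
    ∀ α β, (α, β) ∈ U0 → ∀ s,
      iteratedDeriv m (fun y => iteratedDeriv j (fun x => Phi0 x y s) α) β
        = evalRep c N (α, β) s := by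
  -- first: representation of the inner iterated derivative
  have hA : ∀ j : ℕ, ∃ (N : ℕ) (c : ℕ → ℝ × ℝ → ℝ), (∀ k, NiceU (c k)) ∧
      RepF (fun α β s => iteratedDeriv j (fun x => Phi0 x β s) α) c N := by
    intro j
    induction j with
    | zero =>
      refine ⟨1, fun k => if k = 0 then ps0 else fun _ => 0, ?_, ?_⟩
      · intro k p hp n
        dsimp only
        split_ifs
        · exact nice_ps0 hp n
        · exact contDiffAt_const
      · intro α β hU s
        simp [evalRep, Phi0]
    | succ j ih =>
      obtain ⟨N, c, hc, hrep⟩ := ih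
      obtain ⟨c', hc', hrep'⟩ := stepA hc hrep
      refine ⟨N+1, c', hc', ?_⟩
      intro α β hU s
      show iteratedDeriv (j+1) (fun x => Phi0 x β s) α = _
      rw [iteratedDeriv_succ]
      exact hrep' α β hU s
  obtain ⟨N, c, hc, hrep⟩ := hA j
  -- outer induction
  have hB : ∀ m : ℕ, ∃ (N' : ℕ) (c' : ℕ → ℝ × ℝ → ℝ), (∀ k, NiceU (c' k)) ∧
      RepF (fun α β s => iteratedDeriv m
        (fun y => iteratedDeriv j (fun x => Phi0 x y s) α) β) c' N' := by
    intro m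
    induction m with
    | zero => exact ⟨N, c, hc, fun α β hU s => by simpa using hrep α β hU s⟩
    | succ m ih =>
      obtain ⟨N', c', hc', hrep'⟩ := ih
      obtain ⟨c'', hc'', hrep''⟩ := stepB hc' hrep'
      refine ⟨N'+1, c'', hc'', ?_⟩
      intro α β hU s
      show iteratedDeriv (m+1) (fun y => iteratedDeriv j (fun x => Phi0 x y s) α) β = _
      rw [iteratedDeriv_succ]
      exact hrep'' α β hU s
  obtain ⟨N', c', hc', hrep'⟩ := hB m
  exact ⟨N', c', hc', fun α β hU s => hrep' α β hU s⟩

lemma pow_le_fact (x : ℝ) (hx : 0 ≤ x) (N : ℕ) : x^N ≤ (Nat.factorial N : ℝ) * Real.exp x := by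
  have h1 : x^N / (Nat.factorial N : ℝ) ≤ ∑ i ∈ Finset.range (N+1), x^i / (Nat.factorial i : ℝ) :=
    Finset.single_le_sum (f := fun i => x^i / (Nat.factorial i : ℝ)) (fun i _ => by positivity)
      (Finset.self_mem_range_succ N)
  have h2 := Real.sum_le_exp_of_nonneg hx (N+1)
  have h3 : (0:ℝ) < (Nat.factorial N : ℝ) := by positivity
  have h4 : x^N / (Nat.factorial N : ℝ) ≤ Real.exp x := le_trans h1 h2
  calc x^N = (x^N / (Nat.factorial N : ℝ)) * (Nat.factorial N : ℝ) := by field_simp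
  _ ≤ Real.exp x * (Nat.factorial N : ℝ) := mul_le_mul_of_nonneg_right h4 h3.le
  _ = (Nat.factorial N : ℝ) * Real.exp x := mul_comm _ _

lemma key_pow_exp (s : ℝ) (hs : 0 ≤ s) (N : ℕ) :
    s^N * Real.exp (-(3/8)*s) ≤ (Nat.factorial N : ℝ) * (8/3)^N := by
  have h := pow_le_fact ((3/8)*s) (by positivity) N
  have h2 : s^N = (8/3)^N * ((3/8)*s)^N := by
    rw [← mul_pow]
    congr 1
    ring
  calc s^N * Real.exp (-(3/8)*s) = (8/3)^N * (((3/8)*s)^N * Real.exp (-(3/8)*s)) := by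
        rw [h2]; ring
  _ ≤ (8/3)^N * (((Nat.factorial N : ℝ) * Real.exp ((3/8)*s)) * Real.exp (-(3/8)*s)) := by
        apply mul_le_mul_of_nonneg_left (mul_le_mul_of_nonneg_right h (Real.exp_pos _).le)
        positivity
  _ = (Nat.factorial N : ℝ) * (8/3)^N := by
        rw [mul_assoc ((Nat.factorial N : ℝ)), ← Real.exp_add]
        norm_num
        ring

lemma boundRep {K : Set (ℝ × ℝ)} (hK : IsCompact K) (hKU : K ⊆ U0)
    (hmu : ∀ p ∈ K, 3/4 ≤ mu0 p) (c : ℕ → ℝ × ℝ → ℝ) (hc : ∀ k, NiceU (c k)) (N : ℕ) :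
    ∃ C > 0, ∀ p ∈ K, ∀ s ≥ 0, |evalRep c N p s| ≤ C * Real.exp (-(3/8)*s) := by
  induction N with
  | zero =>
    refine ⟨1, one_pos, fun p hp s hs => ?_⟩
    simp only [evalRep, Finset.range_zero, Finset.sum_empty, abs_zero, one_mul]
    positivity
  | succ N ih =>
    obtain ⟨C₀, hC₀, h₀⟩ := ih
    have hcont : ContinuousOn (c N) K := fun p hp =>
      ((hc N p (hKU hp) 0).continuousAt).continuousWithinAt
    obtain ⟨C₁, hC₁⟩ := hK.exists_bound_of_continuousOn hcont
    set C₂ : ℝ := max C₁ 0 with hC₂def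
    have hC₂ : 0 ≤ C₂ := le_max_right _ _
    have hC₁' : ∀ p ∈ K, |c N p| ≤ C₂ := fun p hp =>
      le_trans (by simpa [Real.norm_eq_abs] using hC₁ p hp) (le_max_left _ _)
    refine ⟨C₀ + C₂ * ((Nat.factorial N : ℝ) * (8/3)^N), by positivity, fun p hp s hs => ?_⟩
    have hterm : |c N p * s^N * Real.exp (-(mu0 p) * s)|
        ≤ C₂ * ((Nat.factorial N : ℝ) * (8/3)^N) * Real.exp (-(3/8)*s) := by
      have habs : |c N p * s^N * Real.exp (-(mu0 p) * s)|
          = |c N p| * (s^N * Real.exp (-(mu0 p) * s)) := by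
        rw [abs_mul, abs_mul, abs_of_nonneg (pow_nonneg hs N),
          abs_of_nonneg (Real.exp_pos _).le, mul_assoc]
      rw [habs]
      have hstep1 : s^N * Real.exp (-(mu0 p) * s) ≤ s^N * Real.exp (-(3/4)*s) := by
        apply mul_le_mul_of_nonneg_left _ (pow_nonneg hs N)
        apply Real.exp_le_exp.mpr
        nlinarith [hmu p hp]
      have hstep2 : s^N * Real.exp (-(3/4)*s)
          ≤ ((Nat.factorial N : ℝ) * (8/3)^N) * Real.exp (-(3/8)*s) := by
        have hsplit : Real.exp (-(3/4)*s) = Real.exp (-(3/8)*s) * Real.exp (-(3/8)*s) := by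
          rw [← Real.exp_add]; ring_nf
        calc s^N * Real.exp (-(3/4)*s)
            = (s^N * Real.exp (-(3/8)*s)) * Real.exp (-(3/8)*s) := by rw [hsplit]; ring
        _ ≤ ((Nat.factorial N : ℝ) * (8/3)^N) * Real.exp (-(3/8)*s) :=
            mul_le_mul_of_nonneg_right (key_pow_exp s hs N) (Real.exp_pos _).le
      calc |c N p| * (s^N * Real.exp (-(mu0 p) * s))
          ≤ C₂ * (s^N * Real.exp (-(mu0 p) * s)) := by
            apply mul_le_mul_of_nonneg_right (hC₁' p hp)
            positivity
      _ ≤ C₂ * (((Nat.factorial N : ℝ) * (8/3)^N) * Real.exp (-(3/8)*s)) := by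
            apply mul_le_mul_of_nonneg_left (le_trans hstep1 hstep2) hC₂
      _ = C₂ * ((Nat.factorial N : ℝ) * (8/3)^N) * Real.exp (-(3/8)*s) := by ring
    have hsplit : evalRep c (N+1) p s = evalRep c N p s + c N p * s^N * Real.exp (-(mu0 p) * s) := by
      unfold evalRep; rw [Finset.sum_range_succ]
    calc |evalRep c (N+1) p s| ≤ |evalRep c N p s| + |c N p * s^N * Real.exp (-(mu0 p) * s)| := by
          rw [hsplit]; exact abs_add_le _ _
    _ ≤ C₀ * Real.exp (-(3/8)*s) + C₂ * ((Nat.factorial N : ℝ) * (8/3)^N) * Real.exp (-(3/8)*s) :=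
          add_le_add (h₀ p hp s hs) hterm
    _ = (C₀ + C₂ * ((Nat.factorial N : ℝ) * (8/3)^N)) * Real.exp (-(3/8)*s) := by ring

lemma itdConstMul (n : ℕ) (C : ℝ) (f : ℝ → ℝ) :
    iteratedDeriv n (fun y => C * f y) = fun x => C * iteratedDeriv n f x := by
  induction n with
  | zero => simp [iteratedDeriv_zero]
  | succ n ih =>
    rw [iteratedDeriv_succ, ih, iteratedDeriv_succ]
    funext x
    exact deriv_const_mul_field C

lemma derivCompConstMul {c : ℝ} (hc : c ≠ 0) (f : ℝ → ℝ) (x : ℝ) :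
    deriv (fun y => f (c * y)) x = c * deriv f (c * x) := by
  by_cases hd : DifferentiableAt ℝ f (c * x)
  · have hg : HasDerivAt (fun y : ℝ => c * y) c x := by
      simpa using (hasDerivAt_id x).const_mul c
    have h2 := HasDerivAt.comp x (hd.hasDerivAt) hg
    have h3 : HasDerivAt (fun y => f (c * y)) (deriv f (c * x) * c) x := h2
    rw [h3.deriv]
    ring
  · have hnd : ¬ DifferentiableAt ℝ (fun y => f (c * y)) x := by
      intro hD
      apply hd
      set g : ℝ → ℝ := fun y => f (c * y) with hg
      have hD' : DifferentiableAt ℝ g (c⁻¹ * (c * x)) := by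
        rw [inv_mul_cancel_left₀ hc]; exact hD
      have hinner : DifferentiableAt ℝ (fun z : ℝ => c⁻¹ * z) (c * x) :=
        differentiableAt_id.const_mul _
      have hcomp : DifferentiableAt ℝ (fun z : ℝ => g (c⁻¹ * z)) (c * x) :=
        hD'.comp (c * x) hinner
      have : (fun z : ℝ => g (c⁻¹ * z)) = f := by
        funext z
        simp [hg, mul_inv_cancel_left₀ hc]
      rwa [this] at hcomp
    rw [deriv_zero_of_not_differentiableAt hnd, deriv_zero_of_not_differentiableAt hd, mul_zero]

lemma itdCompConstMul (n : ℕ) {c : ℝ} (hc : c ≠ 0) (f : ℝ → ℝ) :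
    iteratedDeriv n (fun y => f (c * y)) = fun x => c^n * iteratedDeriv n f (c * x) := by
  induction n with
  | zero => simp [iteratedDeriv_zero]
  | succ n ih =>
    rw [iteratedDeriv_succ, ih]
    funext x
    rw [deriv_const_mul_field (c^n), iteratedDeriv_succ]
    rw [derivCompConstMul hc (iteratedDeriv n f) x]
    ring


lemma Gamma2_eq {σ σ₁ σ₂ r a b : ℝ} :
    Gamma2 σ σ₁ σ₂ r a b = Gm (r ^ (2*(σ₂-σ₁)) * a, r ^ (2*(σ-2*σ₁)) * b) := by
  unfold Gamma2 Gm n0 Gamma1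
  congr 1
  ring

lemma K01_eq {σ σ₁ σ₂ r : ℝ} (hr : 0 < r) (t a b : ℝ) :
    K01 σ σ₁ σ₂ t r a b
      = r ^ (2*σ - 4*σ₁) *
        Phi0 (r ^ (2*(σ₂-σ₁)) * a) (r ^ (2*(σ-2*σ₁)) * b) (r ^ (2*σ₁) * t) := by
  have hX : r ^ (2*σ₁) ≠ 0 := (Real.rpow_pos_of_pos hr _).ne'
  have hsplit : r ^ (2*(σ-σ₁)) = r ^ (2*σ - 4*σ₁) * r ^ (2*σ₁) := by
    rw [← Real.rpow_add hr]; ring_nf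
  set P : ℝ × ℝ := (r ^ (2*(σ₂-σ₁)) * a, r ^ (2*(σ-2*σ₁)) * b) with hP
  have hexp : Real.exp (lam2 σ σ₁ σ₂ r a b * t)
      = Real.exp (-(mu0 P) * (r ^ (2*σ₁) * t)) := by
    congr 1
    unfold lam2 mu0
    rw [Gamma2_eq]
    ring
  unfold K01 Phi0 Gfun lam1 ps0 Gamma1
  rw [hexp, Gamma2_eq, hsplit, mul_inv, mul_inv]
  have hGa : (1 + a * r ^ (2*(σ₂-σ₁)))⁻¹ = (1 + r ^ (2*(σ₂-σ₁)) * a)⁻¹ := by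
    congr 1; ring
  rw [hGa]
  linear_combination ((-2 : ℝ) * (r ^ (2*σ - 4*σ₁)) * ((1 + r ^ (2*(σ₂-σ₁)) * a)⁻¹)^2 *
    (Gm P)⁻¹ * (1 + Gm P)⁻¹ * Real.exp (-(mu0 P) * (r ^ (2*σ₁) * t))) *
    (inv_mul_cancel₀ hX)
end SK

set_option maxHeartbeats 1000000 in
theorem stmt9 (σ σ₁ σ₂ εs c₁ : ℝ) (hσ : 1 ≤ σ) (hσ₁ : 0 ≤ σ₁) (h12 : σ₁ < σ / 2)
    (h22 : σ / 2 < σ₂) (h2σ : σ₂ ≤ σ) (hε : 0 < εs) (hc₁ : 0 < c₁)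
    (hΓ : ∀ r ∈ Set.Ioc (0:ℝ) εs, ∀ a ∈ Set.Icc (0:ℝ) 1, ∀ b ∈ Set.Icc (0:ℝ) 1,
      (1:ℝ)/2 ≤ Gamma2 σ σ₁ σ₂ r a b)
    (hlam : ∀ r ∈ Set.Ioc (0:ℝ) εs, ∀ a ∈ Set.Icc (0:ℝ) 1, ∀ b ∈ Set.Icc (0:ℝ) 1,
      lam2 σ σ₁ σ₂ r a b ≤ -c₁ * r ^ (2*σ₁))
    (j m : ℕ) :
    ∃ C > 0, ∃ c > 0, ∀ t > 0, ∀ r ∈ Set.Ioc (0:ℝ) εs, ∀ a ∈ Set.Icc (0:ℝ) 1,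
      ∀ b ∈ Set.Icc (0:ℝ) 1,
      |pderiv2 j m (fun a' b' => K01 σ σ₁ σ₂ t r a' b') a b|
        ≤ C * Real.exp (-c * r ^ (2*σ₁) * t)
            * r ^ (2*(σ-2*σ₁) + 2*(j:ℝ)*(σ₂-σ₁) + 2*(m:ℝ)*(σ-2*σ₁)) := by
  classical
  obtain ⟨N, cf, hcf, hrep⟩ := SK.repPhi j m
  have hq : (0:ℝ) < 2*(σ₂-σ₁) := by linarith
  have hpE : (0:ℝ) < 2*(σ-2*σ₁) := by linarith
  set A : ℝ := εs ^ (2*(σ₂-σ₁)) with hA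
  set B : ℝ := εs ^ (2*(σ-2*σ₁)) with hB
  set K : Set (ℝ × ℝ) :=
    (Set.Icc (0:ℝ) A ×ˢ Set.Icc (0:ℝ) B) ∩ {p : ℝ × ℝ | 4*p.2 ≤ 3/4*(1+p.1)^2} with hKdef
  have hKcomp : IsCompact K :=
    (isCompact_Icc.prod isCompact_Icc).inter_right
      (isClosed_le (by fun_prop) (by fun_prop))
  have hKU : K ⊆ SK.U0 := by
    intro p hp
    obtain ⟨⟨hp1, hp2⟩, hp3⟩ := hp
    simp only [Set.mem_setOf_eq] at hp3
    have h1 : (0:ℝ) ≤ p.1 := hp1.1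
    have hne : (1:ℝ) + p.1 ≠ 0 := by nlinarith
    have hinv : ((1+p.1)⁻¹)^2 * (1+p.1)^2 = 1 := by field_simp
    constructor
    · show -2⁻¹ < p.1; norm_num; nlinarith
    · show 1/9 < SK.n0 p
      unfold SK.n0
      nlinarith [mul_le_mul_of_nonneg_right hp3 (sq_nonneg ((1+p.1)⁻¹))]
  have hmuK : ∀ p ∈ K, 3/4 ≤ SK.mu0 p := by
    intro p hp
    obtain ⟨⟨hp1, hp2⟩, hp3⟩ := hp
    simp only [Set.mem_setOf_eq] at hp3
    have h1 : (0:ℝ) ≤ p.1 := hp1.1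
    have hne : (1:ℝ) + p.1 ≠ 0 := by nlinarith
    have hinv : ((1+p.1)⁻¹)^2 * (1+p.1)^2 = 1 := by field_simp
    have hn : (1:ℝ)/4 ≤ SK.n0 p := by
      unfold SK.n0
      nlinarith [mul_le_mul_of_nonneg_right hp3 (sq_nonneg ((1+p.1)⁻¹))]
    have hG : (1:ℝ)/2 ≤ SK.Gm p := by
      unfold SK.Gm
      have : Real.sqrt (1/4) ≤ Real.sqrt (SK.n0 p) := Real.sqrt_le_sqrt hn
      have h4 : Real.sqrt (1/4) = 1/2 := by
        rw [show (1/4:ℝ) = (1/2)^2 by norm_num, Real.sqrt_sq (by norm_num)]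
      linarith
    unfold SK.mu0
    nlinarith
  obtain ⟨C, hCpos, hbound⟩ := SK.boundRep hKcomp hKU hmuK cf hcf N
  refine ⟨C, hCpos, 3/8, by norm_num, ?_⟩
  intro t ht r hr a ha b hb
  obtain ⟨hr0, hrε⟩ := hr
  have hrq : r ^ (2*(σ₂-σ₁)) ≠ 0 := (Real.rpow_pos_of_pos hr0 _).ne'
  have hrpE : r ^ (2*(σ-2*σ₁)) ≠ 0 := (Real.rpow_pos_of_pos hr0 _).ne'
  set α : ℝ := r ^ (2*(σ₂-σ₁)) * a with hα
  set β : ℝ := r ^ (2*(σ-2*σ₁)) * b with hβ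
  set s : ℝ := r ^ (2*σ₁) * t with hs
  have hs0 : 0 ≤ s := by
    have := Real.rpow_pos_of_pos hr0 (2*σ₁); nlinarith
  -- membership of the scaled point in K
  have hαK : (α, β) ∈ K := by
    have hΓ' : (1:ℝ)/2 ≤ SK.Gm (α, β) := by
      rw [← SK.Gamma2_eq (σ := σ)]
      exact hΓ r ⟨hr0, hrε⟩ a ha b hb
    have hn0pos : 0 < SK.n0 (α, β) := by
      have h := Real.sqrt_pos.mp (lt_of_lt_of_le (by norm_num) hΓ')
      exact h
    have hn14 : (1:ℝ)/4 ≤ SK.n0 (α, β) := by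
      have h := Real.sq_sqrt hn0pos.le
      unfold SK.Gm at hΓ'
      nlinarith [Real.sqrt_nonneg (SK.n0 (α, β))]
    have hα0 : 0 ≤ α := by
      have := (Real.rpow_pos_of_pos hr0 (2*(σ₂-σ₁))).le
      exact mul_nonneg this ha.1
    have hβ0 : 0 ≤ β := by
      have := (Real.rpow_pos_of_pos hr0 (2*(σ-2*σ₁))).le
      exact mul_nonneg this hb.1
    have hne : (1:ℝ) + α ≠ 0 := by nlinarith
    refine ⟨⟨⟨hα0, ?_⟩, ⟨hβ0, ?_⟩⟩, ?_⟩
    · calc α ≤ r ^ (2*(σ₂-σ₁)) * 1 := by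
            have := (Real.rpow_pos_of_pos hr0 (2*(σ₂-σ₁))).le
            exact mul_le_mul_of_nonneg_left ha.2 this
      _ = r ^ (2*(σ₂-σ₁)) := mul_one _
      _ ≤ A := Real.rpow_le_rpow hr0.le hrε hq.le
    · calc β ≤ r ^ (2*(σ-2*σ₁)) * 1 := by
            have := (Real.rpow_pos_of_pos hr0 (2*(σ-2*σ₁))).le
            exact mul_le_mul_of_nonneg_left hb.2 this
      _ = r ^ (2*(σ-2*σ₁)) := mul_one _
      _ ≤ B := Real.rpow_le_rpow hr0.le hrε hpE.le
    · show 4*β ≤ 3/4*(1+α)^2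
      unfold SK.n0 at hn14
      have hinv : ((1+α)⁻¹)^2 * (1+α)^2 = 1 := by field_simp
      nlinarith [mul_le_mul_of_nonneg_right (show 4*β*((1+α)⁻¹)^2 ≤ 3/4 by nlinarith)
        (sq_nonneg (1+α))]
  -- scaling identity
  have hscale : pderiv2 j m (fun a' b' => K01 σ σ₁ σ₂ t r a' b') a b
      = r ^ (2*σ - 4*σ₁) * ((r ^ (2*(σ₂-σ₁)))^j * ((r ^ (2*(σ-2*σ₁)))^m *
          iteratedDeriv m (fun y => iteratedDeriv j (fun x => SK.Phi0 x y s) α) β)) := by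
    unfold pderiv2
    have hinner : (fun b' => iteratedDeriv j (fun a' => K01 σ σ₁ σ₂ t r a' b') a)
        = fun b' => (r ^ (2*σ - 4*σ₁) * (r ^ (2*(σ₂-σ₁)))^j) *
            (fun y => iteratedDeriv j (fun x => SK.Phi0 x y s) α) (r ^ (2*(σ-2*σ₁)) * b') := by
      funext b'
      have h1 : (fun a' => K01 σ σ₁ σ₂ t r a' b')
          = fun a' => r ^ (2*σ - 4*σ₁) *
              (fun x => SK.Phi0 x (r ^ (2*(σ-2*σ₁)) * b') s) (r ^ (2*(σ₂-σ₁)) * a') :=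
        funext fun a' => SK.K01_eq hr0 t a' b'
      rw [h1, SK.itdConstMul j (r ^ (2*σ - 4*σ₁))
        (fun a' => (fun x => SK.Phi0 x (r ^ (2*(σ-2*σ₁)) * b') s) (r ^ (2*(σ₂-σ₁)) * a')),
        SK.itdCompConstMul j hrq (fun x => SK.Phi0 x (r ^ (2*(σ-2*σ₁)) * b') s)]
      ring
    rw [hinner, SK.itdConstMul m (r ^ (2*σ - 4*σ₁) * (r ^ (2*(σ₂-σ₁)))^j)
        (fun b' => (fun y => iteratedDeriv j (fun x => SK.Phi0 x y s) α) (r ^ (2*(σ-2*σ₁)) * b')),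
        SK.itdCompConstMul m hrpE (fun y => iteratedDeriv j (fun x => SK.Phi0 x y s) α)]
    ring
  -- the bound
  have hU : (α, β) ∈ SK.U0 := hKU hαK
  have hval := hrep α β hU s
  have hb2 := hbound (α, β) hαK s hs0
  rw [hval] at hscale
  rw [hscale]
  have hpow : r ^ (2*σ - 4*σ₁) * ((r ^ (2*(σ₂-σ₁)))^j * ((r ^ (2*(σ-2*σ₁)))^m * 1))
      = r ^ (2*(σ-2*σ₁) + 2*(j:ℝ)*(σ₂-σ₁) + 2*(m:ℝ)*(σ-2*σ₁)) := by
    rw [mul_one, ← Real.rpow_natCast (r ^ (2*(σ₂-σ₁))) j,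
      ← Real.rpow_natCast (r ^ (2*(σ-2*σ₁))) m,
      ← Real.rpow_mul hr0.le, ← Real.rpow_mul hr0.le,
      ← Real.rpow_add hr0, ← Real.rpow_add hr0]
    congr 1
    ring
  have hrP : (0:ℝ) < r ^ (2*σ - 4*σ₁) := Real.rpow_pos_of_pos hr0 _
  have hrqj : (0:ℝ) < (r ^ (2*(σ₂-σ₁)))^j := pow_pos (Real.rpow_pos_of_pos hr0 _) j
  have hrpm : (0:ℝ) < (r ^ (2*(σ-2*σ₁)))^m := pow_pos (Real.rpow_pos_of_pos hr0 _) m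
  have habs : |r ^ (2*σ - 4*σ₁) * ((r ^ (2*(σ₂-σ₁)))^j * ((r ^ (2*(σ-2*σ₁)))^m *
      SK.evalRep cf N (α, β) s))|
      = r ^ (2*σ - 4*σ₁) * ((r ^ (2*(σ₂-σ₁)))^j * ((r ^ (2*(σ-2*σ₁)))^m *
        |SK.evalRep cf N (α, β) s|)) := by
    rw [abs_mul, abs_mul, abs_mul, abs_of_pos hrP, abs_of_pos hrqj, abs_of_pos hrpm]
  rw [habs]
  have hfinal : r ^ (2*σ - 4*σ₁) * ((r ^ (2*(σ₂-σ₁)))^j * ((r ^ (2*(σ-2*σ₁)))^m *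
      |SK.evalRep cf N (α, β) s|))
      ≤ r ^ (2*σ - 4*σ₁) * ((r ^ (2*(σ₂-σ₁)))^j * ((r ^ (2*(σ-2*σ₁)))^m *
        (C * Real.exp (-(3/8)*s)))) := by
    have := hb2
    nlinarith [hrP, hrqj, hrpm, mul_pos hrP (mul_pos hrqj hrpm)]
  calc r ^ (2*σ - 4*σ₁) * ((r ^ (2*(σ₂-σ₁)))^j * ((r ^ (2*(σ-2*σ₁)))^m *
      |SK.evalRep cf N (α, β) s|))
      ≤ r ^ (2*σ - 4*σ₁) * ((r ^ (2*(σ₂-σ₁)))^j * ((r ^ (2*(σ-2*σ₁)))^m *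
        (C * Real.exp (-(3/8)*s)))) := hfinal
  _ = C * Real.exp (-(3/8) * r ^ (2*σ₁) * t) *
      (r ^ (2*σ - 4*σ₁) * ((r ^ (2*(σ₂-σ₁)))^j * ((r ^ (2*(σ-2*σ₁)))^m * 1))) := by
    rw [hs]; ring
  _ = C * Real.exp (-(3/8) * r ^ (2*σ₁) * t) *
      r ^ (2*(σ-2*σ₁) + 2*(j:ℝ)*(σ₂-σ₁) + 2*(m:ℝ)*(σ-2*σ₁)) := by rw [hpow]
end
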